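/- Let α > 0, let f ∈ L¹[−π,π] with f ≥ 0, let b ∈ (−π,0) ∪ (0,π), let f_H be the polarization of f with respect to b, and let u_f and u_{f_H} be the solutions of the Robin problem with heat sources f and f_H respectively. Set J = [−π,b] if b > 0 and J = [b,π] if b < 0. Then u_f(x) ≤ u_{f_H}(x) for every x ∈ J. Moreover, the following are equivalent: (i) u_f(x) = u_{f_H}(x) for some x ∈ J; (ii) u_f(x) = u_{f_H}(x) for every x ∈ J; (iii) f = f_H almost everywhere on [−π,π]; (iv) u_f = u_{f_H} identically on [−π,π]. -/

import Mathlib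

open MeasureTheory Real Set

/-- The constant `c_α = α/(1+απ)`. -/
noncomputable def cA (α : ℝ) : ℝ := α / (1 + α * π)

/-- The Green's function of the Robin problem on `[-π, π]`. -/
noncomputable def robinGreen (α x y : ℝ) : ℝ :=
  -(1/2) * cA α * x * y - (1/2) * |x - y| + 1 / (2 * cA α)

/-- The solution of the Robin problem with heat source `f`. -/
noncomputable def robinSol (α : ℝ) (f : ℝ → ℝ) (x : ℝ) : ℝ :=
  ∫ y in (-π)..π, robinGreen α x y * f y

/-- The polarization (towards zero) of `f : [-π,π] → ℝ` with respect to `b`. -/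
noncomputable def polar (b : ℝ) (f : ℝ → ℝ) (x : ℝ) : ℝ :=
  if 0 < b then
    if x < 2 * b - π then f x
    else if x ≤ b then max (f x) (f (2 * b - x))
    else min (f x) (f (2 * b - x))
  else
    if x ≤ b then min (f x) (f (2 * b - x))
    else if x ≤ 2 * b + π then max (f x) (f (2 * b - x))
    else f x

lemma cA_pos {α : ℝ} (hα : 0 < α) : 0 < cA α := by
  have := pi_pos
  apply div_pos hα; nlinarith

lemma cA_pi_lt_one {α : ℝ} (hα : 0 < α) : cA α * π < 1 := by
  have hπ := pi_pos
  rw [cA, div_mul_eq_mul_div, div_lt_one (by nlinarith)]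
  nlinarith

lemma kernel_nonneg {α b x y : ℝ} (hα : 0 < α) (hb0 : 0 < b) (hbπ : b < π)
    (hx : x ∈ Icc (-π) b) (hy : y ∈ Icc (2*b - π) b) :
    0 ≤ robinGreen α x y - robinGreen α x (2*b - y) := by
  obtain ⟨hx1, hx2⟩ := hx
  obtain ⟨hy1, hy2⟩ := hy
  have hc := cA_pos hα
  have hcπ := cA_pi_lt_one hα
  have habs2 : |x - (2*b - y)| = 2*b - y - x := by
    rw [abs_of_nonpos (by linarith)]; ring
  rcases le_total x y with h | h
  · rw [robinGreen, robinGreen, habs2, abs_of_nonpos (by linarith)]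
    nlinarith [mul_nonneg hc.le (sub_nonneg.mpr hx1), mul_pos hc pi_pos]
  · rw [robinGreen, robinGreen, habs2, abs_of_nonneg (by linarith)]
    rcases le_total x 0 with hx0 | hx0
    · nlinarith [mul_nonneg hc.le (neg_nonneg.mpr hx0)]
    · nlinarith [mul_nonneg (mul_nonneg hc.le hx0) (sub_nonneg.mpr hy2)]

lemma kernel_pos {α b x y : ℝ} (hα : 0 < α) (hb0 : 0 < b) (hbπ : b < π)
    (hx : x ∈ Icc (-π) b) (hy : y ∈ Ico (2*b - π) b) :
    0 < robinGreen α x y - robinGreen α x (2*b - y) := by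
  obtain ⟨hx1, hx2⟩ := hx
  obtain ⟨hy1, hy2⟩ := hy
  have hc := cA_pos hα
  have hcπ := cA_pi_lt_one hα
  have habs2 : |x - (2*b - y)| = 2*b - y - x := by
    rw [abs_of_nonpos (by linarith)]; ring
  rcases le_total x y with h | h
  · rw [robinGreen, robinGreen, habs2, abs_of_nonpos (by linarith)]
    nlinarith [mul_nonneg hc.le (sub_nonneg.mpr hx1), mul_pos hc pi_pos]
  · rw [robinGreen, robinGreen, habs2, abs_of_nonneg (by linarith)]
    rcases le_total x 0 with hx0 | hx0
    · nlinarith [mul_nonneg hc.le (neg_nonneg.mpr hx0)]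
    · nlinarith [mul_nonneg (mul_nonneg hc.le hx0) (sub_nonneg.mpr hy2.le),
        mul_pos (mul_pos hc hb0) (sub_pos.mpr hy2)]

variable {b x : ℝ} {f : ℝ → ℝ}

lemma polar_lt (hb0 : 0 < b) (hx : x < 2*b - π) : polar b f x = f x := by
  simp [polar, hb0, hx]

lemma polar_mid (hb0 : 0 < b) (hx1 : 2*b - π ≤ x) (hx2 : x ≤ b) :
    polar b f x = max (f x) (f (2*b - x)) := by
  simp [polar, hb0, not_lt.mpr hx1, hx2]

lemma polar_gt (hb0 : 0 < b) (hbπ : b < π) (hx : b < x) : polar b f x = min (f x) (f (2*b - x)) := by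
  have h1 : ¬ x < 2*b - π := by push_neg; nlinarith
  simp [polar, hb0, h1, not_le.mpr hx]

lemma h_nonneg (hb0 : 0 < b) (hx1 : 2*b - π ≤ x) (hx2 : x ≤ b) :
    0 ≤ polar b f x - f x := by
  rw [polar_mid hb0 hx1 hx2]; simp [le_max_left]

lemma h_reflect (hb0 : 0 < b) (hbπ : b < π) (hx1 : 2*b - π ≤ x) (hx2 : x ≤ b) :
    polar b f (2*b - x) - f (2*b - x) = -(polar b f x - f x) := by
  rcases eq_or_lt_of_le hx2 with rfl | hlt
  · have e : 2*x - x = x := by ring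
    rw [e, polar_mid hb0 hx1 le_rfl, e, max_self]
    ring
  · have hb2 : b < 2*b - x := by linarith
    rw [polar_gt hb0 hbπ hb2, polar_mid hb0 hx1 hx2]
    have : 2*b - (2*b - x) = x := by ring
    rw [this, min_comm]
    have := max_add_min (f x) (f (2*b - x))
    linarith [min_le_left (f x) (f (2*b-x)), le_max_left (f x) (f (2*b-x))]


lemma green_cont (α x : ℝ) : Continuous (robinGreen α x) := by
  unfold robinGreen
  fun_prop

lemma ii_congr {F G : ℝ → ℝ} {u v : ℝ} (huv : u ≤ v)
    (h : ∀ᵐ y ∂(volume : Measure ℝ), y ∈ Ioc u v → F y = G y)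
    (hF : IntervalIntegrable F volume u v) : IntervalIntegrable G volume u v := by
  rw [intervalIntegrable_iff_integrableOn_Ioc_of_le huv] at hF ⊢
  exact hF.congr ((ae_restrict_iff' measurableSet_Ioc).2 h)

lemma core {α b : ℝ} (hα : 0 < α) (hb0 : 0 < b) (hbπ : b < π)
    (f : ℝ → ℝ) (hf : IntegrableOn f (Icc (-π) π)) :
    (∀ x ∈ Icc (-π) b, robinSol α f x ≤ robinSol α (polar b f) x) ∧
    ((∃ x ∈ Icc (-π) b, robinSol α f x = robinSol α (polar b f) x) →
       f =ᵐ[volume.restrict (Icc (-π) π)] polar b f) ∧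
    (f =ᵐ[volume.restrict (Icc (-π) π)] polar b f →
       ∀ x : ℝ, robinSol α f x = robinSol α (polar b f) x) := by
  have hπ := pi_pos
  set a : ℝ := 2*b - π with ha
  have haπ : -π ≤ a := by simp only [ha]; linarith
  have hab : a ≤ b := by simp only [ha]; linarith
  have hbπ' : b ≤ π := hbπ.le
  -- interval integrability of f on subintervals
  have hfi : ∀ u v : ℝ, -π ≤ u → u ≤ v → v ≤ π → IntervalIntegrable f volume u v := by
    intro u v h1 h2 h3
    exact (hf.mono_set (uIcc_subset_Icc ⟨h1, by linarith⟩ ⟨by linarith, h3⟩)).intervalIntegrable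
  have hfσ : ∀ u v : ℝ, -π ≤ u → u ≤ v → v ≤ π → 2*b - v ∈ Icc (-π) π → 2*b - u ∈ Icc (-π) π →
      IntervalIntegrable (fun y => f (2*b - y)) volume u v := by
    intro u v h1 h2 h3 h4 h5
    have := (hfi (2*b - v) (2*b - u) h4.1 (by linarith) h5.2).comp_sub_left (2*b)
    have e1 : 2*b - (2*b - u) = u := by ring
    have e2 : 2*b - (2*b - v) = v := by ring
    rw [e1, e2] at this
    exact this.symm
  have hfσab : IntervalIntegrable (fun y => f (2*b - y)) volume a b :=
    hfσ a b haπ hab (by linarith) ⟨by linarith, by linarith⟩ ⟨by simp only [ha]; linarith, by simp only [ha]; linarith⟩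
  have hfσbπ : IntervalIntegrable (fun y => f (2*b - y)) volume b π :=
    hfσ b π (by linarith) (by linarith) le_rfl ⟨by simp only [ha] at haπ ⊢; linarith, by linarith⟩ ⟨by linarith, by linarith⟩
  -- max and min combinations
  have hmax : IntervalIntegrable (fun y => max (f y) (f (2*b - y))) volume a b := by
    have h1 := ((((hfi a b haπ hab hbπ').add hfσab).add
      (((hfi a b haπ hab hbπ').sub hfσab).abs)).div_const 2)
    have e : (fun y => (f y + f (2*b - y) + |f y - f (2*b - y)|) / 2)
        = fun y => max (f y) (f (2*b - y)) := by
      funext y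
      rcases le_total (f y) (f (2*b - y)) with h | h
      · rw [abs_of_nonpos (by linarith), max_eq_right h]; ring
      · rw [abs_of_nonneg (by linarith), max_eq_left h]; ring
    rwa [e] at h1
  have hmin : IntervalIntegrable (fun y => min (f y) (f (2*b - y))) volume b π := by
    have h1 := ((((hfi b π (by linarith) hbπ' le_rfl).add hfσbπ).sub
      (((hfi b π (by linarith) hbπ' le_rfl).sub hfσbπ).abs)).div_const 2)
    have e : (fun y => (f y + f (2*b - y) - |f y - f (2*b - y)|) / 2)
        = fun y => min (f y) (f (2*b - y)) := by
      funext y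
      rcases le_total (f y) (f (2*b - y)) with h | h
      · rw [abs_of_nonpos (by linarith), min_eq_left h]; ring
      · rw [abs_of_nonneg (by linarith), min_eq_right h]; ring
    rwa [e] at h1
  have hnea : ∀ᵐ (y : ℝ) ∂(volume : Measure ℝ), y ≠ a := by
    simp only [ae_iff, not_not]
    rw [show {y : ℝ | y = a} = {a} from rfl]
    exact measure_singleton a
  have hneb : ∀ᵐ (y : ℝ) ∂(volume : Measure ℝ), y ≠ b := by
    simp only [ae_iff, not_not]
    rw [show {y : ℝ | y = b} = {b} from rfl]
    exact measure_singleton b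
  have hneπ : ∀ᵐ (y : ℝ) ∂(volume : Measure ℝ), y ≠ π := by
    simp only [ae_iff, not_not]
    rw [show {y : ℝ | y = π} = {π} from rfl]
    exact measure_singleton π
  -- polar is interval integrable on the three pieces
  have hp1 : IntervalIntegrable (polar b f) volume (-π) a := by
    refine ii_congr haπ (hnea.mono fun y hy hy' => ?_) (hfi (-π) a le_rfl haπ (by linarith))
    exact (polar_lt hb0 (lt_of_le_of_ne hy'.2 hy)).symm
  have hp2 : IntervalIntegrable (polar b f) volume a b := by
    refine ii_congr hab (Filter.Eventually.of_forall fun y hy => ?_) hmax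
    exact (polar_mid hb0 hy.1.le hy.2).symm
  have hp3 : IntervalIntegrable (polar b f) volume b π := by
    refine ii_congr hbπ' (Filter.Eventually.of_forall fun y hy => ?_) hmin
    exact (polar_gt hb0 hbπ hy.1).symm
  have hpab : IntervalIntegrable (polar b f) volume a b := hp2
  have hpall : IntervalIntegrable (polar b f) volume (-π) π := (hp1.trans hp2).trans hp3
  have hfall : IntervalIntegrable f volume (-π) π := hfi (-π) π le_rfl (by linarith) le_rfl
  -- the difference function
  set h : ℝ → ℝ := fun y => polar b f y - f y with hh
  have hhab : IntervalIntegrable h volume a b := hp2.sub (hfi a b haπ hab hbπ')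
  have hh1 : IntervalIntegrable h volume (-π) a := hp1.sub (hfi (-π) a le_rfl haπ (by linarith))
  have hh3 : IntervalIntegrable h volume b π := hp3.sub (hfi b π (by linarith) hbπ' le_rfl)
  -- key identity
  have key : ∀ x : ℝ, robinSol α (polar b f) x - robinSol α f x
      = ∫ y in a..b, (robinGreen α x y - robinGreen α x (2*b - y)) * h y := by
    intro x
    set g : ℝ → ℝ := robinGreen α x with hg
    have hgc : Continuous g := green_cont α x
    have mul_ii : ∀ {F : ℝ → ℝ} {u v : ℝ}, IntervalIntegrable F volume u v →
        IntervalIntegrable (fun y => g y * F y) volume u v := fun hF =>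
      hF.continuousOn_mul hgc.continuousOn
    have mulσ_ii : ∀ {F : ℝ → ℝ} {u v : ℝ}, IntervalIntegrable F volume u v →
        IntervalIntegrable (fun y => g (2*b - y) * F y) volume u v := fun hF =>
      hF.continuousOn_mul (hgc.comp (by fun_prop)).continuousOn
    have step1 : robinSol α (polar b f) x - robinSol α f x = ∫ y in (-π)..π, g y * h y := by
      rw [robinSol, robinSol, ← intervalIntegral.integral_sub (mul_ii hpall) (mul_ii hfall)]
      apply intervalIntegral.integral_congr
      intro y _
      simp only [hh]; ring
    have split : (∫ y in (-π)..π, g y * h y)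
        = (∫ y in (-π)..a, g y * h y) + (∫ y in a..b, g y * h y) + (∫ y in b..π, g y * h y) := by
      have s1 := intervalIntegral.integral_add_adjacent_intervals
        (mul_ii hh1) (mul_ii hhab)
      have s2 := intervalIntegral.integral_add_adjacent_intervals
        ((mul_ii hh1).trans (mul_ii hhab)) (mul_ii hh3)
      rw [← s2, ← s1]
    have piece1 : (∫ y in (-π)..a, g y * h y) = 0 := by
      rw [intervalIntegral.integral_congr_ae (g := fun _ => (0:ℝ))
        (hnea.mono fun y hy hy' => ?_), intervalIntegral.integral_zero]
      rw [uIoc_of_le haπ] at hy'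
      have : y < a := lt_of_le_of_ne hy'.2 hy
      simp only [hh, polar_lt hb0 this, sub_self, mul_zero]
    have piece3 : (∫ y in b..π, g y * h y) = - ∫ y in a..b, g (2*b - y) * h y := by
      have hc := intervalIntegral.integral_comp_sub_left (a := a) (b := b)
        (fun t => g t * h t) (2*b)
      have e1 : 2*b - b = b := by ring
      have e2 : 2*b - a = π := by simp only [ha]; ring
      rw [e1, e2] at hc
      rw [← hc, ← intervalIntegral.integral_neg]
      apply intervalIntegral.integral_congr
      intro y hy
      rw [uIcc_of_le hab] at hy
      have hr := h_reflect (f := f) hb0 hbπ hy.1 hy.2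
      simp only [hh]
      rw [hr]
      ring
    have final : (∫ y in a..b, g y * h y) - (∫ y in a..b, g (2*b - y) * h y)
        = ∫ y in a..b, (g y - g (2*b - y)) * h y := by
      rw [← intervalIntegral.integral_sub (mul_ii hhab) (mulσ_ii hhab)]
      apply intervalIntegral.integral_congr
      intro y _
      ring
    rw [step1, split, piece1, piece3]
    rw [← final]
    ring
  -- part 1: monotonicity
  have part1 : ∀ x ∈ Icc (-π) b, robinSol α f x ≤ robinSol α (polar b f) x := by
    intro x hx
    have h0 : 0 ≤ ∫ y in a..b, (robinGreen α x y - robinGreen α x (2*b - y)) * h y := by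
      apply intervalIntegral.integral_nonneg hab
      intro y hy
      exact mul_nonneg (kernel_nonneg hα hb0 hbπ hx hy) (h_nonneg hb0 hy.1 hy.2)
    linarith [key x]
  refine ⟨part1, ?_, ?_⟩
  · -- equality at one point implies a.e. equality
    rintro ⟨x, hx, hxe⟩
    have hzero : (∫ y in a..b, (robinGreen α x y - robinGreen α x (2*b - y)) * h y) = 0 := by
      rw [← key x, hxe, sub_self]
    set K : ℝ → ℝ := fun y => (robinGreen α x y - robinGreen α x (2*b - y)) * h y with hK
    have hKint : IntervalIntegrable K volume a b := by
      apply hhab.continuousOn_mul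
      exact (((green_cont α x).sub ((green_cont α x).comp (by fun_prop))).continuousOn)
    have hKnn : 0 ≤ᵐ[volume.restrict (Ioc a b)] K := by
      refine (ae_restrict_iff' measurableSet_Ioc).2 (Filter.Eventually.of_forall fun y hy => ?_)
      exact mul_nonneg (kernel_nonneg hα hb0 hbπ hx ⟨hy.1.le, hy.2⟩)
        (h_nonneg hb0 hy.1.le hy.2)
    have hKz : K =ᵐ[volume.restrict (Ioc a b)] 0 :=
      (intervalIntegral.integral_eq_zero_iff_of_le_of_nonneg_ae hab hKnn hKint).1 hzero
    have E1 : ∀ᵐ y ∂(volume : Measure ℝ), y ∈ Ioc a b → h y = 0 := by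
      have := (ae_restrict_iff' measurableSet_Ioc).1 hKz
      filter_upwards [this, hneb] with y h1 h2 hy
      have h3 := h1 hy
      have hker : 0 < robinGreen α x y - robinGreen α x (2*b - y) :=
        kernel_pos hα hb0 hbπ hx ⟨hy.1.le, lt_of_le_of_ne hy.2 h2⟩
      simp only [hK, Pi.zero_apply] at h3
      rcases mul_eq_zero.1 h3 with h4 | h4
      · exact absurd h4 hker.ne'
      · exact h4
    have E2 : ∀ᵐ y ∂(volume : Measure ℝ), 2*b - y ∈ Ioc a b → h (2*b - y) = 0 :=
      (Measure.measurePreserving_sub_left volume (2*b)).quasiMeasurePreserving.ae E1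
    refine (ae_restrict_iff' measurableSet_Icc).2 ?_
    filter_upwards [E1, E2, hnea, hneπ] with y e1 e2 ha' hπ' hy
    rcases lt_trichotomy y a with hya | hya | hya
    · exact (polar_lt hb0 hya).symm
    · exact absurd hya ha'
    · rcases le_or_gt y b with hyb | hyb
      · have := e1 ⟨hya, hyb⟩
        simp only [hh] at this
        linarith [this]
      · have hyπ : y < π := lt_of_le_of_ne hy.2 hπ'
        have hσ : 2*b - y ∈ Ioc a b := ⟨by simp only [ha]; linarith, by linarith⟩
        have h2 := e2 hσ
        have hr := h_reflect (f := f) hb0 hbπ hσ.1.le hσ.2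
        have e3 : 2*b - (2*b - y) = y := by ring
        rw [e3] at hr
        simp only [hh] at h2 hr
        linarith
  · -- a.e. equality implies equality of solutions
    intro hae x
    have hae' : ∀ᵐ y ∂(volume : Measure ℝ), y ∈ Icc (-π) π → f y = polar b f y :=
      (ae_restrict_iff' measurableSet_Icc).1 hae
    rw [robinSol, robinSol]
    apply intervalIntegral.integral_congr_ae
    filter_upwards [hae'] with y h1 hy
    rw [uIoc_of_le (by linarith : -π ≤ π)] at hy
    rw [h1 ⟨hy.1.le, hy.2⟩]

lemma robinGreen_neg (α x y : ℝ) : robinGreen α (-x) (-y) = robinGreen α x y := by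
  unfold robinGreen
  rw [show -x - -y = -(x - y) by ring, abs_neg]
  ring

lemma robinSol_neg (α : ℝ) (F : ℝ → ℝ) (x : ℝ) :
    robinSol α (fun y => F (-y)) (-x) = robinSol α F x := by
  rw [robinSol, robinSol]
  have e : (fun y => robinGreen α (-x) y * F (-y))
      = fun y => (fun t => robinGreen α x t * F t) (-y) := by
    funext y
    simp only
    rw [show robinGreen α (-x) y = robinGreen α (-x) (- -y) by rw [neg_neg],
      robinGreen_neg]
  rw [e, intervalIntegral.integral_comp_neg (fun t => robinGreen α x t * F t), neg_neg]

lemma polar_neg_pt {b : ℝ} (hb : b < 0) (hbπ : -π < b) (f : ℝ → ℝ) (y : ℝ) :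
    polar (-b) (fun t => f (-t)) y = polar b f (-y) := by
  have hπ := pi_pos
  have hb' : 0 < -b := by linarith
  have hnot : ¬ 0 < b := by linarith
  simp only [polar, if_pos hb', if_neg hnot,
    show -(2 * -b - y) = 2*b - -y from by ring]
  by_cases h1 : y < 2 * -b - π
  · rw [if_pos h1, if_neg (by linarith : ¬ -y ≤ b),
      if_neg (by linarith : ¬ -y ≤ 2*b + π)]
  · rw [if_neg h1]
    push_neg at h1
    by_cases h2 : y ≤ -b
    · rw [if_pos h2]
      rcases eq_or_lt_of_le h2 with he | hlt
      · have hy : -y = b := by rw [he]; ring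
        rw [if_pos (le_of_eq hy), hy, show 2*b - b = b from by ring, max_self, min_self]
      · rw [if_neg (by linarith : ¬ -y ≤ b), if_pos (by linarith : -y ≤ 2*b + π)]
    · rw [if_neg h2] at *
      rw [if_pos (by linarith : -y ≤ b)]

lemma ae_comp_neg {F G : ℝ → ℝ} (h : F =ᵐ[volume.restrict (Icc (-π) π)] G) :
    (fun x => F (-x)) =ᵐ[volume.restrict (Icc (-π) π)] (fun x => G (-x)) := by
  have h' : ∀ᵐ y ∂(volume : Measure ℝ), y ∈ Icc (-π) π → F y = G y :=
    (ae_restrict_iff' measurableSet_Icc).1 h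
  have h2 : ∀ᵐ y ∂(volume : Measure ℝ), -y ∈ Icc (-π) π → F (-y) = G (-y) :=
    (Measure.measurePreserving_neg volume).quasiMeasurePreserving.ae h'
  refine (ae_restrict_iff' measurableSet_Icc).2 (h2.mono fun y hy h3 => hy ?_)
  simp only [mem_Icc] at h3 ⊢
  constructor <;> linarith [h3.1, h3.2]

lemma integ_comp_neg {f : ℝ → ℝ} (hf : IntegrableOn f (Icc (-π) π)) :
    IntegrableOn (fun t => f (-t)) (Icc (-π) π) := by
  have hπ := pi_pos
  have h1 : IntervalIntegrable f volume (-π) π := by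
    rw [intervalIntegrable_iff_integrableOn_Icc_of_le (by linarith)]
    exact hf
  have h2 := ((IntervalIntegrable.iff_comp_neg (f := f)).mp h1).symm
  rw [neg_neg] at h2
  rw [← intervalIntegrable_iff_integrableOn_Icc_of_le (by linarith : -π ≤ π)]
  exact h2


/-- **`u_f ≤ u_{f_H}` on the near interval `J`, with equivalent equality conditions.** -/
theorem robinSol_le_polar_on_near_interval
    (α : ℝ) (hα : 0 < α)
    (f : ℝ → ℝ) (hf : IntegrableOn f (Icc (-π) π))
    (hf0 : ∀ x ∈ Icc (-π) π, 0 ≤ f x)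
    (b : ℝ) (hb : b ∈ Ioo (-π) 0 ∪ Ioo 0 π) :
    (∀ x ∈ (if 0 < b then Icc (-π) b else Icc b π),
      robinSol α f x ≤ robinSol α (polar b f) x) ∧
    ((∃ x ∈ (if 0 < b then Icc (-π) b else Icc b π),
        robinSol α f x = robinSol α (polar b f) x) ↔
      (∀ x ∈ (if 0 < b then Icc (-π) b else Icc b π),
        robinSol α f x = robinSol α (polar b f) x)) ∧
    ((∀ x ∈ (if 0 < b then Icc (-π) b else Icc b π),
        robinSol α f x = robinSol α (polar b f) x) ↔
      f =ᵐ[volume.restrict (Icc (-π) π)] polar b f) ∧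
    (f =ᵐ[volume.restrict (Icc (-π) π)] polar b f ↔
      EqOn (robinSol α f) (robinSol α (polar b f)) (Icc (-π) π)) := by
  have hπ := pi_pos
  rcases hb with hb | hb
  · -- b < 0
    obtain ⟨hbl, hbu⟩ := hb
    have hnot : ¬ 0 < b := by linarith
    simp only [if_neg hnot]
    set g : ℝ → ℝ := fun t => f (-t) with hgdef
    have hg : IntegrableOn g (Icc (-π) π) := integ_comp_neg hf
    have hb0' : 0 < -b := by linarith
    have hbπ' : -b < π := by linarith
    obtain ⟨c1, c2, c3⟩ := core hα hb0' hbπ' g hg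
    have hpolar_eq : polar (-b) g = fun y => polar b f (-y) :=
      funext fun y => polar_neg_pt hbu hbl f y
    have B1 : ∀ x : ℝ, robinSol α g (-x) = robinSol α f x := fun x => robinSol_neg α f x
    have B2 : ∀ x : ℝ, robinSol α (polar (-b) g) (-x) = robinSol α (polar b f) x := by
      intro x
      rw [hpolar_eq]
      exact robinSol_neg α (polar b f) x
    have B3 : ∀ x : ℝ, x ∈ Icc b π → -x ∈ Icc (-π) (-b) := by
      intro x hx
      simp only [mem_Icc] at hx ⊢
      constructor <;> linarith [hx.1, hx.2]
    have B4 : (f =ᵐ[volume.restrict (Icc (-π) π)] polar b f) ↔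
        (g =ᵐ[volume.restrict (Icc (-π) π)] polar (-b) g) := by
      constructor
      · intro h
        rw [hpolar_eq]
        exact ae_comp_neg h
      · intro h
        have h2 := ae_comp_neg h
        have e1 : (fun x : ℝ => g (-x)) = f := by
          funext x; simp [hgdef]
        have e2 : (fun x : ℝ => polar (-b) g (-x)) = polar b f := by
          funext x
          rw [hpolar_eq]
          simp only [neg_neg]
        rwa [e1, e2] at h2
    have sol_le : ∀ x ∈ Icc b π, robinSol α f x ≤ robinSol α (polar b f) x := by
      intro x hx
      rw [← B1 x, ← B2 x]
      exact c1 (-x) (B3 x hx)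
    have ex_to_ae : (∃ x ∈ Icc b π, robinSol α f x = robinSol α (polar b f) x) →
        f =ᵐ[volume.restrict (Icc (-π) π)] polar b f := by
      rintro ⟨x, hx, he⟩
      refine B4.2 (c2 ⟨-x, B3 x hx, ?_⟩)
      rw [B1 x, B2 x]; exact he
    have ae_to_all : f =ᵐ[volume.restrict (Icc (-π) π)] polar b f →
        ∀ x : ℝ, robinSol α f x = robinSol α (polar b f) x := by
      intro h x
      rw [← B1 x, ← B2 x]
      exact c3 (B4.1 h) (-x)
    refine ⟨sol_le, ⟨?_, ?_⟩, ⟨?_, ?_⟩, ⟨?_, ?_⟩⟩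
    · intro hex x hx
      exact ae_to_all (ex_to_ae hex) x
    · intro hall
      exact ⟨b, ⟨le_rfl, by linarith⟩, hall b ⟨le_rfl, by linarith⟩⟩
    · intro hall
      exact ex_to_ae ⟨b, ⟨le_rfl, by linarith⟩, hall b ⟨le_rfl, by linarith⟩⟩
    · intro h x hx
      exact ae_to_all h x
    · intro h x hx
      exact ae_to_all h x
    · intro h
      exact ex_to_ae ⟨π, ⟨by linarith, le_rfl⟩, h ⟨by linarith, le_rfl⟩⟩
  · -- b > 0
    obtain ⟨hb0, hbπ⟩ := hb
    simp only [if_pos hb0]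
    obtain ⟨c1, c2, c3⟩ := core hα hb0 hbπ f hf
    refine ⟨c1, ⟨?_, ?_⟩, ⟨?_, ?_⟩, ⟨?_, ?_⟩⟩
    · intro hex x hx
      exact c3 (c2 hex) x
    · intro hall
      exact ⟨b, ⟨by linarith, le_rfl⟩, hall b ⟨by linarith, le_rfl⟩⟩
    · intro hall
      exact c2 ⟨b, ⟨by linarith, le_rfl⟩, hall b ⟨by linarith, le_rfl⟩⟩
    · intro h x hx
      exact c3 h x
    · intro h x hx
      exact c3 h x
    · intro h
      exact c2 ⟨b, ⟨by linarith, le_rfl⟩, h ⟨by linarith, hbπ.le⟩⟩
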